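/- Let U ⊆ ℝ^m be a nonempty polyhedral set, M ∈ ℝ^{m×m} symmetric positive semidefinite, B ∈ ℝ^{m×n} injective, b ∈ ℝ^m, and define ρ : ℝ^n → ℝ ∪ {+∞} by ρ(y) = θ_{U,M}(b + B y). If ρ is coercive, then there exist constants β > 0 and N > 0 such that ρ(y) ≥ β‖y‖ for every y ∈ dom(ρ) with ‖y‖ ≥ N. -/

import Mathlib

open Matrix Set MeasureTheory
open scoped RealInnerProductSpace

noncomputable section

/-- `E d` is Euclidean space `ℝ^d`. -/
abbrev E (d : ℕ) := EuclideanSpace ℝ (Fin d)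

/-- Matrix-vector multiplication as a map between Euclidean spaces. -/
def mulVecE {m n : ℕ} (B : Matrix (Fin m) (Fin n) ℝ) (y : E n) : E m :=
  Matrix.toEuclideanLin B y

/-- The polar of a set `K`: `K° = {v | ⟪v, w⟫ ≤ 0 for all w ∈ K}`. -/
def polarCone {d : ℕ} (K : Set (E d)) : Set (E d) :=
  {v | ∀ w ∈ K, ⟪v, w⟫ ≤ 0}

/-- The horizon cone of `C`: directions `x` with `w + τ • x ∈ C` for all `w ∈ C`, `τ ≥ 0`. -/
def horizonCone {d : ℕ} (C : Set (E d)) : Set (E d) :=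
  {x | ∀ w ∈ C, ∀ τ : ℝ, 0 ≤ τ → w + τ • x ∈ C}

/-- The null space of a matrix `M`, as a set of vectors. -/
def nullSet {d : ℕ} (M : Matrix (Fin d) (Fin d) ℝ) : Set (E d) :=
  {w | mulVecE M w = 0}

/-- A set is polyhedral if it is of the form `{u | Aᵀ u ≤ a}` (componentwise). -/
def IsPolyhedral {d : ℕ} (U : Set (E d)) : Prop :=
  ∃ (k : ℕ) (A : Matrix (Fin d) (Fin k) ℝ) (a : Fin k → ℝ),
    U = {u | ∀ i, mulVecE Aᵀ u i ≤ a i}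

/-- The piecewise linear-quadratic penalty
`θ_{U,M}(w) = sup_{u ∈ U} (⟪u, w⟫ - (1/2) ⟪u, M u⟫)`, valued in `ℝ ∪ {±∞}`. -/
def theta {m : ℕ} (U : Set (E m)) (M : Matrix (Fin m) (Fin m) ℝ) (w : E m) : EReal :=
  ⨆ u ∈ U, ((⟪u, w⟫ - (1 / 2) * ⟪u, mulVecE M u⟫ : ℝ) : EReal)

/-- `cone U = {t • u | u ∈ U, t ≥ 0}`. -/
def coneOf {d : ℕ} (U : Set (E d)) : Set (E d) :=
  {w | ∃ u ∈ U, ∃ t : ℝ, 0 ≤ t ∧ w = t • u}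

/-- A function `ρ : ℝ^n → ℝ ∪ {+∞}` is coercive if `ρ(y) → +∞` as `‖y‖ → ∞`. -/
def Coercive {n : ℕ} (ρ : E n → EReal) : Prop :=
  ∀ C : ℝ, ∃ R : ℝ, ∀ y : E n, R ≤ ‖y‖ → (C : EReal) ≤ ρ y


/-- if rho(y) = theta_{U,M}(b + B y) is coercive, then rho grows at least
linearly: there are beta > 0 and N > 0 with rho(y) ≥ beta * ‖y‖ for all y in dom rho
with ‖y‖ ≥ N. -/
theorem coercive_linear_growth {m n : ℕ}
    (U : Set (E m)) (hUne : U.Nonempty) (hUpoly : IsPolyhedral U)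
    (M : Matrix (Fin m) (Fin m) ℝ) (hM : M.PosSemidef)
    (B : Matrix (Fin m) (Fin n) ℝ) (hB : Function.Injective (mulVecE B))
    (b : E m)
    (ρ : E n → EReal) (hρ : ∀ y, ρ y = theta U M (b + mulVecE B y))
    (hcoer : Coercive ρ) :
    ∃ β : ℝ, 0 < β ∧ ∃ N : ℝ, 0 < N ∧
      ∀ y : E n, ρ y < ⊤ → N ≤ ‖y‖ → ((β * ‖y‖ : ℝ) : EReal) ≤ ρ y := by
  by_cases hdom : ∃ y₀ : E n, ρ y₀ < ⊤
  swap
  · exact ⟨1, one_pos, 1, one_pos, fun y hy _ => absurd ⟨y, hy⟩ hdom⟩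
  obtain ⟨y₀, hy₀top⟩ := hdom
  obtain ⟨u₀, hu₀⟩ := hUne
  -- the affine functions whose sup is ρ
  set g : E m → E n → ℝ := fun u y =>
    ⟪u, b + mulVecE B y⟫ - (1 / 2) * ⟪u, mulVecE M u⟫ with hg
  have hρg : ∀ y, ρ y = ⨆ u ∈ U, ((g u y : ℝ) : EReal) := fun y => hρ y
  have hle : ∀ y, ∀ u ∈ U, ((g u y : ℝ) : EReal) ≤ ρ y := by
    intro y u hu
    rw [hρg]
    exact le_iSup₂ (f := fun u (_ : u ∈ U) => ((g u y : ℝ) : EReal)) u hu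
  have hbot : ∀ y, ρ y ≠ ⊥ := by
    intro y h
    have := hle y u₀ hu₀
    rw [h, le_bot_iff] at this
    exact EReal.coe_ne_bot _ this
  -- affinity of g u
  have haff : ∀ u : E m, ∀ t : ℝ, ∀ y z : E n,
      g u ((1 - t) • y + t • z) = (1 - t) * g u y + t * g u z := by
    intro u t y z
    have hB' : mulVecE B ((1 - t) • y + t • z)
        = (1 - t) • mulVecE B y + t • mulVecE B z := by
      simp [mulVecE, map_add, _root_.map_smul]
    simp only [hg, hB', inner_add_right, inner_smul_right]
    ring
  set v₀ := (ρ y₀).toReal with hv₀def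
  have hv₀ : ρ y₀ = (v₀ : EReal) := (EReal.coe_toReal hy₀top.ne (hbot y₀)).symm
  obtain ⟨R, hR⟩ := hcoer (v₀ + 1)
  set c := max R 1 + 2 * ‖y₀‖ with hc
  have hcpos : 0 < c := by
    have := le_max_right R 1
    have := norm_nonneg y₀
    linarith
  set N := max (‖y₀‖ + c) (2 * ‖y₀‖ - 2 * c * v₀ + 1) with hN
  refine ⟨1 / (2 * c), by positivity, N, ?_, ?_⟩
  · have h1 : ‖y₀‖ + c ≤ N := le_max_left _ _
    have := norm_nonneg y₀
    linarith
  intro y hytop hyN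
  set r := (ρ y).toReal with hrdef
  have hr : ρ y = (r : EReal) := (EReal.coe_toReal hytop.ne (hbot y)).symm
  set d := ‖y - y₀‖ with hd
  have hyn : ‖y‖ - ‖y₀‖ ≤ d := norm_sub_norm_le y y₀
  have hNy : ‖y₀‖ + c ≤ ‖y‖ := le_trans (le_max_left _ _) hyN
  have hcd : c ≤ d := by linarith
  have hdpos : 0 < d := lt_of_lt_of_le hcpos hcd
  set t := c / d with ht
  have ht0 : 0 < t := div_pos hcpos hdpos
  have ht1 : t ≤ 1 := (div_le_one hdpos).2 hcd
  set z := (1 - t) • y₀ + t • y with hz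
  have hzy : z - y₀ = t • (y - y₀) := by
    rw [hz]; module
  have hznorm : c - ‖y₀‖ ≤ ‖z‖ := by
    have h1 : ‖z - y₀‖ = t * d := by
      rw [hzy, norm_smul, Real.norm_eq_abs, abs_of_pos ht0]
    have h2 : t * d = c := div_mul_cancel₀ c hdpos.ne'
    have h3 : ‖z - y₀‖ ≤ ‖z‖ + ‖y₀‖ := norm_sub_le z y₀
    linarith [h1, h2, h3]
  have hzR : R ≤ ‖z‖ := by
    have := le_max_left R 1
    have := norm_nonneg y₀
    linarith
  have hlow : ((v₀ + 1 : ℝ) : EReal) ≤ ρ z := hR z hzR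
  have hupper : ρ z ≤ (((1 - t) * v₀ + t * r : ℝ) : EReal) := by
    rw [hρg]
    refine iSup₂_le fun u hu => ?_
    have h1 : g u y₀ ≤ v₀ := by
      have := hle y₀ u hu; rw [hv₀] at this; exact_mod_cast this
    have h2 : g u y ≤ r := by
      have := hle y u hu; rw [hr] at this; exact_mod_cast this
    have h3 : g u z = (1 - t) * g u y₀ + t * g u y := haff u t y₀ y
    refine EReal.coe_le_coe_iff.2 ?_
    rw [h3]
    have h4 : (1 - t) * g u y₀ ≤ (1 - t) * v₀ :=
      mul_le_mul_of_nonneg_left h1 (by linarith)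
    have h5 : t * g u y ≤ t * r := mul_le_mul_of_nonneg_left h2 ht0.le
    linarith
  have hkey : v₀ + 1 ≤ (1 - t) * v₀ + t * r :=
    EReal.coe_le_coe_iff.1 (le_trans hlow hupper)
  -- so t * (r - v₀) ≥ 1, i.e. r ≥ v₀ + d / c
  have htr : 1 ≤ t * (r - v₀) := by nlinarith
  have hrlb : v₀ + d / c ≤ r := by
    have h1 : d / c ≤ t * (r - v₀) * (d / c) := by
      nlinarith [div_pos hdpos hcpos]
    have h2 : t * (d / c) = 1 := by
      rw [ht]; field_simp [hdpos.ne', hcpos.ne']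
    nlinarith [h2]
  have hyN2 : 2 * ‖y₀‖ - 2 * c * v₀ + 1 ≤ ‖y‖ := le_trans (le_max_right _ _) hyN
  have h6 : v₀ * c + d ≤ r * c := by
    have h := mul_le_mul_of_nonneg_right hrlb hcpos.le
    have h' : (v₀ + d / c) * c = v₀ * c + d := by field_simp
    rw [h'] at h
    exact h
  rw [hr]
  refine EReal.coe_le_coe_iff.2 ?_
  rw [div_mul_eq_mul_div, one_mul, div_le_iff₀ (by positivity)]
  linarith
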